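/- Let X and Y be nonzero real or complex Banach spaces. If the direct sum X ⊕_1 Y (the product X × Y with the norm ‖(x, y)‖ = ‖x‖ + ‖y‖) is lush, then both X and Y are lush. -/

import Mathlib

open scoped BigOperators

/-- The open slice `S(B_X, f, α) = {x ∈ B_X : Re f(x) > 1 - α}` of the closed unit ball. -/
def Slice (𝕜 : Type*) {X : Type*} [RCLike 𝕜] [NormedAddCommGroup X] [NormedSpace 𝕜 X]
    (f : X →L[𝕜] 𝕜) (α : ℝ) : Set X :=
  {x | ‖x‖ ≤ 1 ∧ 1 - α < RCLike.re (f x)}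

/-- The convex hull of `𝕋 · S(B_X, f, α)`, i.e. all convex combinations of rotated points of
the slice `S(B_X, f, α)`. -/
def ConvRotSlice (𝕜 : Type*) {X : Type*} [RCLike 𝕜] [NormedAddCommGroup X] [NormedSpace 𝕜 X]
    (f : X →L[𝕜] 𝕜) (α : ℝ) : Set X :=
  {x | ∃ (n : ℕ) (t : Fin n → ℝ) (ω : Fin n → 𝕜) (s : Fin n → X),
    (∀ k, 0 ≤ t k) ∧ (∑ k, t k) = 1 ∧ (∀ k, ‖ω k‖ = 1) ∧ (∀ k, s k ∈ Slice 𝕜 f α) ∧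
    x = ∑ k, ((t k : 𝕜) * ω k) • s k}

/-- A Banach space `X` over `𝕜 = ℝ` or `ℂ` is *lush* if for all `u, v` in the unit sphere and
every `ε > 0` there is a norm-one functional `f` with `u ∈ S(B_X, f, ε)` and
`dist(v, conv(𝕋 · S(B_X, f, ε))) < ε`. -/
def IsLush (𝕜 X : Type*) [RCLike 𝕜] [NormedAddCommGroup X] [NormedSpace 𝕜 X] : Prop :=
  ∀ u v : X, ‖u‖ = 1 → ‖v‖ = 1 → ∀ ε : ℝ, 0 < ε →
    ∃ f : X →L[𝕜] 𝕜, ‖f‖ = 1 ∧ u ∈ Slice 𝕜 f ε ∧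
      Metric.infDist v (ConvRotSlice 𝕜 f ε) < ε

namespace LushAux

variable {𝕜 X Y : Type*} [RCLike 𝕜] [NormedAddCommGroup X] [NormedSpace 𝕜 X]
    [NormedAddCommGroup Y] [NormedSpace 𝕜 Y]

theorem l1norm (z : WithLp 1 (X × Y)) : ‖z‖ = ‖z.fst‖ + ‖z.snd‖ := by
  rw [WithLp.prod_norm_eq_add (by norm_num)]; norm_num

/-- The isometric inclusion of `X` into `X ⊕₁ Y`. -/
noncomputable def iotaX (𝕜 : Type*) [RCLike 𝕜] [NormedSpace 𝕜 X] [NormedSpace 𝕜 Y] :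
    X →ₗᵢ[𝕜] WithLp 1 (X × Y) :=
  ⟨(WithLp.linearEquiv 1 𝕜 (X × Y)).symm.toLinearMap.comp (LinearMap.inl 𝕜 X Y), by
    intro x; rw [show ‖_‖ = _ from l1norm _]; simp⟩

/-- The isometric inclusion of `Y` into `X ⊕₁ Y`. -/
noncomputable def iotaY (𝕜 : Type*) [RCLike 𝕜] [NormedSpace 𝕜 X] [NormedSpace 𝕜 Y] :
    Y →ₗᵢ[𝕜] WithLp 1 (X × Y) :=
  ⟨(WithLp.linearEquiv 1 𝕜 (X × Y)).symm.toLinearMap.comp (LinearMap.inr 𝕜 X Y), by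
    intro y; rw [show ‖_‖ = _ from l1norm _]; simp⟩

/-- The projection of `X ⊕₁ Y` onto `X`. -/
noncomputable def piX (𝕜 : Type*) [RCLike 𝕜] [NormedSpace 𝕜 X] [NormedSpace 𝕜 Y] :
    WithLp 1 (X × Y) →L[𝕜] X :=
  (ContinuousLinearMap.fst 𝕜 X Y).comp
    (WithLp.prodContinuousLinearEquiv 1 𝕜 X Y).toContinuousLinearMap

/-- The projection of `X ⊕₁ Y` onto `Y`. -/
noncomputable def piY (𝕜 : Type*) [RCLike 𝕜] [NormedSpace 𝕜 X] [NormedSpace 𝕜 Y] :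
    WithLp 1 (X × Y) →L[𝕜] Y :=
  (ContinuousLinearMap.snd 𝕜 X Y).comp
    (WithLp.prodContinuousLinearEquiv 1 𝕜 X Y).toContinuousLinearMap

theorem decomp (z : WithLp 1 (X × Y)) :
    z = iotaX 𝕜 (piX 𝕜 z) + iotaY 𝕜 (piY 𝕜 z) := by
  show z = WithLp.toLp 1 ((z.fst + 0, 0 + z.snd) : X × Y)
  rw [add_zero, zero_add]
  exact rfl

theorem norm_piXY (z : WithLp 1 (X × Y)) : ‖z‖ = ‖piX 𝕜 z‖ + ‖piY 𝕜 z‖ := l1norm z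

theorem mem_convRot {f : X →L[𝕜] 𝕜} {α : ℝ} {x : X} (hx : x ∈ Slice 𝕜 f α) :
    x ∈ ConvRotSlice 𝕜 f α :=
  ⟨1, fun _ => 1, fun _ => 1, fun _ => x, fun _ => zero_le_one, by simp, fun _ => by simp,
    fun _ => hx, by simp⟩

/-- Lushness transfers along linear isometric isomorphisms. -/
theorem isLush_of_equiv {𝕜 Z W : Type*} [RCLike 𝕜] [NormedAddCommGroup Z] [NormedSpace 𝕜 Z]
    [NormedAddCommGroup W] [NormedSpace 𝕜 W] (e : Z ≃ₗᵢ[𝕜] W) (h : IsLush 𝕜 Z) :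
    IsLush 𝕜 W := by
  intro u v hu hv ε hε
  obtain ⟨f, hf, huS, hd⟩ := h (e.symm u) (e.symm v)
    (by rw [e.symm.norm_map, hu]) (by rw [e.symm.norm_map, hv]) ε hε
  refine ⟨f.comp e.symm.toLinearIsometry.toContinuousLinearMap, ?_, ⟨hu.le, ?_⟩, ?_⟩
  · rw [show f.comp e.symm.toLinearIsometry.toContinuousLinearMap = f.comp (e.symm : W →L[𝕜] Z) from rfl,
      ContinuousLinearMap.opNorm_comp_linearIsometryEquiv f e.symm]; exact hf
  · show 1 - ε < RCLike.re (f (e.symm u))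
    exact huS.2
  · obtain ⟨w, hw, hdw⟩ := (Metric.infDist_lt_iff ⟨_, mem_convRot huS⟩).mp hd
    obtain ⟨n, t, ω, s, ht0, ht1, hω, hs, hwsum⟩ := hw
    have hmem : e w ∈ ConvRotSlice 𝕜 (f.comp e.symm.toLinearIsometry.toContinuousLinearMap) ε := by
      refine ⟨n, t, ω, fun k => e (s k), ht0, ht1, hω, fun k => ⟨?_, ?_⟩, ?_⟩
      · rw [e.norm_map]; exact (hs k).1
      · show 1 - ε < RCLike.re (f (e.symm (e (s k))))
        rw [e.symm_apply_apply]; exact (hs k).2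
      · rw [hwsum, map_sum]
        exact Finset.sum_congr rfl fun k _ => by rw [map_smul]
    calc Metric.infDist v _ ≤ dist v (e w) := Metric.infDist_le_dist_of_mem hmem
    _ = dist (e (e.symm v)) (e w) := by rw [e.apply_symm_apply]
    _ = dist (e.symm v) w := e.dist_map _ _
    _ < ε := hdw

/-- The swap isometry `X ⊕₁ Y ≃ Y ⊕₁ X`. -/
noncomputable def swapL1 (𝕜 : Type*) [RCLike 𝕜] [NormedSpace 𝕜 X] [NormedSpace 𝕜 Y] :
    WithLp 1 (X × Y) ≃ₗᵢ[𝕜] WithLp 1 (Y × X) where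
  toLinearEquiv := (WithLp.linearEquiv 1 𝕜 (X × Y)).trans
    ((LinearEquiv.prodComm 𝕜 X Y).trans (WithLp.linearEquiv 1 𝕜 (Y × X)).symm)
  norm_map' := fun z => by
    rw [show ‖_‖ = _ from l1norm _, show ‖z‖ = _ from l1norm z]
    exact add_comm _ _

/-- If `X ⊕₁ Y` is lush, then `X` is lush. -/
theorem fst [Nontrivial X] (h : IsLush 𝕜 (WithLp 1 (X × Y))) : IsLush 𝕜 X := by
  intro u v hu hv ε hε
  set ε' : ℝ := min ε 1 / 3 with hε'
  have hε'pos : 0 < ε' := by rw [hε']; positivity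
  have hε'ε : 2 * ε' < ε := by
    have h1 : min ε 1 ≤ ε := min_le_left ε 1
    rw [hε']; linarith
  have hε'13 : ε' ≤ 1 / 3 := by
    have h1 : min ε 1 ≤ 1 := min_le_right ε 1
    rw [hε']; linarith
  obtain ⟨F, hF, huS, hd⟩ := h (iotaX 𝕜 u) (iotaX 𝕜 v)
    (by rw [(iotaX 𝕜).norm_map, hu]) (by rw [(iotaX 𝕜).norm_map, hv]) ε' hε'pos
  -- the restricted functional, made opaque
  obtain ⟨f0, hf0app⟩ : ∃ f0 : X →L[𝕜] 𝕜, ∀ x : X, f0 x = F (iotaX 𝕜 x) :=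
    ⟨F.comp (iotaX 𝕜).toContinuousLinearMap, fun _ => rfl⟩
  have hf0le : ‖f0‖ ≤ 1 := by
    refine ContinuousLinearMap.opNorm_le_bound _ zero_le_one fun x => ?_
    rw [hf0app, one_mul]
    calc ‖F (iotaX 𝕜 x)‖ ≤ ‖F‖ * ‖iotaX 𝕜 x‖ := F.le_opNorm _
    _ = ‖x‖ := by rw [hF, (iotaX 𝕜).norm_map, one_mul]
  have hfu0 : 1 - ε' < RCLike.re (f0 u) := by rw [hf0app]; exact huS.2
  have hreu_pos : (0:ℝ) < RCLike.re (f0 u) := by linarith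
  have hr0 : 0 < ‖f0‖ := by
    have h1 : RCLike.re (f0 u) ≤ ‖f0 u‖ := RCLike.re_le_norm _
    have h2 := f0.le_opNorm u
    rw [hu, mul_one] at h2
    linarith
  -- the normalized functional, made opaque
  obtain ⟨f, hfn, hfre⟩ : ∃ f : X →L[𝕜] 𝕜, ‖f‖ = 1 ∧
      ∀ x : X, RCLike.re (f x) = ‖f0‖⁻¹ * RCLike.re (f0 x) := by
    refine ⟨((‖f0‖⁻¹ : ℝ) : 𝕜) • f0, ?_, fun x => ?_⟩
    · have e : ‖((‖f0‖⁻¹ : ℝ) : 𝕜) • f0‖ = ‖((‖f0‖⁻¹ : ℝ) : 𝕜)‖ * ‖f0‖ :=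
        norm_smul ((‖f0‖⁻¹ : ℝ) : 𝕜) f0
      rw [e, RCLike.norm_ofReal, abs_of_pos (inv_pos.mpr hr0), inv_mul_cancel₀ hr0.ne']
    · show RCLike.re ((((‖f0‖⁻¹ : ℝ) : 𝕜) • f0) x) = _
      rw [ContinuousLinearMap.smul_apply, smul_eq_mul, RCLike.re_ofReal_mul]
  have hkey : ∀ x : X, 0 ≤ RCLike.re (f0 x) → RCLike.re (f0 x) ≤ RCLike.re (f x) := by
    intro x hx
    rw [hfre]
    have h1 : ‖f0‖⁻¹ * ‖f0‖ = 1 := inv_mul_cancel₀ hr0.ne'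
    nlinarith [inv_pos.mpr hr0]
  refine ⟨f, hfn, ⟨hu.le, ?_⟩, ?_⟩
  · have h1 := hkey u hreu_pos.le
    linarith
  · obtain ⟨w, hw, hdvw⟩ := (Metric.infDist_lt_iff ⟨_, mem_convRot huS⟩).mp hd
    obtain ⟨n, t, ω, s, ht0, ht1, hω, hs, hwsum⟩ := hw
    obtain ⟨c, hc⟩ : ∃ c : Fin n → 𝕜, ∀ k, c k = (t k : 𝕜) * ω k := ⟨_, fun _ => rfl⟩
    have hcnorm : ∀ k, ‖c k‖ = t k := fun k => by
      rw [hc, norm_mul, hω, mul_one, RCLike.norm_ofReal, abs_of_nonneg (ht0 k)]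
    obtain ⟨xs, hxs⟩ : ∃ xs : Fin n → X, ∀ k, xs k = piX 𝕜 (s k) := ⟨_, fun _ => rfl⟩
    obtain ⟨ys, hys⟩ : ∃ ys : Fin n → Y, ∀ k, ys k = piY 𝕜 (s k) := ⟨_, fun _ => rfl⟩
    have hsnorm : ∀ k, ‖xs k‖ + ‖ys k‖ ≤ 1 := fun k => by
      have h1 := (hs k).1
      rw [norm_piXY (𝕜 := 𝕜)] at h1
      rw [hxs, hys]
      exact h1
    have hysle1 : ∀ k, ‖ys k‖ ≤ 1 := fun k =>
      le_trans (le_add_of_nonneg_left (norm_nonneg _)) (hsnorm k)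
    have hYsmall : ∀ y : Y, |RCLike.re (F (iotaY 𝕜 y))| ≤ ‖y‖ := fun y => by
      calc |RCLike.re (F (iotaY 𝕜 y))| ≤ ‖F (iotaY 𝕜 y)‖ := RCLike.abs_re_le_norm _
      _ ≤ ‖F‖ * ‖iotaY 𝕜 y‖ := F.le_opNorm _
      _ = ‖y‖ := by rw [hF, (iotaY 𝕜).norm_map, one_mul]
    have hfx : ∀ k, 1 - ε' - ‖ys k‖ < RCLike.re (f0 (xs k)) := by
      intro k
      have h1 : 1 - ε' < RCLike.re (F (s k)) := (hs k).2
      have h2 : F (s k) = f0 (xs k) + F (iotaY 𝕜 (ys k)) := by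
        rw [hf0app, hxs, hys, ← map_add, ← decomp]
      rw [h2, map_add] at h1
      have h3 := hYsmall (ys k)
      rw [abs_le] at h3
      linarith [h3.1]
    obtain ⟨s', hs'⟩ : ∃ s' : Fin n → X, ∀ k, s' k = xs k + ((‖ys k‖ : ℝ) : 𝕜) • u :=
      ⟨_, fun _ => rfl⟩
    have hs'norm : ∀ k, ‖s' k‖ ≤ 1 := fun k => by
      rw [hs']
      calc ‖xs k + ((‖ys k‖ : ℝ) : 𝕜) • u‖ ≤ ‖xs k‖ + ‖((‖ys k‖ : ℝ) : 𝕜) • u‖ := norm_add_le _ _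
      _ = ‖xs k‖ + ‖ys k‖ := by
          rw [norm_smul, RCLike.norm_ofReal, abs_of_nonneg (norm_nonneg _), hu, mul_one]
      _ ≤ 1 := hsnorm k
    have hf0s' : ∀ k, 1 - 2 * ε' < RCLike.re (f0 (s' k)) := by
      intro k
      have h1 : f0 (s' k) = f0 (xs k) + ((‖ys k‖ : ℝ) : 𝕜) * f0 u := by
        rw [hs', map_add, map_smul, smul_eq_mul]
      rw [h1, map_add, RCLike.re_ofReal_mul]
      nlinarith [hfx k, hysle1 k, norm_nonneg (ys k), hfu0]
    have hs'S : ∀ k, s' k ∈ Slice 𝕜 f ε := by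
      intro k
      refine ⟨hs'norm k, ?_⟩
      have h1 := hf0s' k
      have h2 := hkey (s' k) (by linarith)
      linarith
    have hwfst : piX 𝕜 w = ∑ k, c k • xs k := by
      rw [hwsum, map_sum]
      exact Finset.sum_congr rfl fun k _ => by rw [map_smul, ← hc, ← hxs]
    have hwsnd : piY 𝕜 w = ∑ k, c k • ys k := by
      rw [hwsum, map_sum]
      exact Finset.sum_congr rfl fun k _ => by rw [map_smul, ← hc, ← hys]
    have hdisteq : dist (iotaX 𝕜 v) w = ‖v - ∑ k, c k • xs k‖ + ‖∑ k, c k • ys k‖ := by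
      have e1 : (iotaX 𝕜 v - w).fst = v - piX 𝕜 w := rfl
      have e2 : (iotaX 𝕜 v - w).snd = 0 - piY 𝕜 w := rfl
      rw [dist_eq_norm, l1norm, e1, e2, hwfst, hwsnd, zero_sub, norm_neg]
    rw [hdisteq] at hdvw
    have hvA : ‖v - ∑ k, c k • xs k‖ < ε' := by
      have := norm_nonneg (∑ k, c k • ys k); linarith
    have hAle : ‖∑ k, c k • xs k‖ ≤ ∑ k, t k * ‖xs k‖ := by
      calc ‖∑ k, c k • xs k‖ ≤ ∑ k, ‖c k • xs k‖ := norm_sum_le _ _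
      _ = ∑ k, t k * ‖xs k‖ := Finset.sum_congr rfl fun k _ => by rw [norm_smul, hcnorm]
    have hAge : 1 - ε' < ‖∑ k, c k • xs k‖ := by
      have h1 : ‖v‖ - ‖∑ k, c k • xs k‖ ≤ ‖v - ∑ k, c k • xs k‖ := norm_sub_norm_le _ _
      rw [hv] at h1
      linarith
    have hsumys : ∑ k, t k * ‖ys k‖ < ε' := by
      have h1 : ∑ k, (t k * ‖xs k‖ + t k * ‖ys k‖) ≤ ∑ k, t k :=
        Finset.sum_le_sum fun k _ => by
          nlinarith [hsnorm k, ht0 k, norm_nonneg (xs k), norm_nonneg (ys k)]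
      rw [Finset.sum_add_distrib, ht1] at h1
      linarith
    have hPmem : (∑ k, ((t k : 𝕜) * ω k) • s' k) ∈ ConvRotSlice 𝕜 f ε :=
      ⟨n, t, ω, s', ht0, ht1, hω, hs'S, rfl⟩
    have hvP : ‖v - ∑ k, ((t k : 𝕜) * ω k) • s' k‖ < ε := by
      have e : ∑ k, ((t k : 𝕜) * ω k) • s' k
          = (∑ k, c k • xs k) + ∑ k, c k • (((‖ys k‖ : ℝ) : 𝕜) • u) := by
        rw [← Finset.sum_add_distrib]
        exact Finset.sum_congr rfl fun k _ => by rw [hs', ← hc, smul_add]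
      have hB : ‖∑ k, c k • (((‖ys k‖ : ℝ) : 𝕜) • u)‖ ≤ ∑ k, t k * ‖ys k‖ := by
        calc ‖∑ k, c k • (((‖ys k‖ : ℝ) : 𝕜) • u)‖ ≤ ∑ k, ‖c k • (((‖ys k‖ : ℝ) : 𝕜) • u)‖ :=
          norm_sum_le _ _
        _ = ∑ k, t k * ‖ys k‖ := Finset.sum_congr rfl fun k _ => by
            rw [norm_smul, norm_smul, hcnorm, RCLike.norm_ofReal,
              abs_of_nonneg (norm_nonneg _), hu, mul_one]
      calc ‖v - ∑ k, ((t k : 𝕜) * ω k) • s' k‖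
          = ‖(v - ∑ k, c k • xs k) - ∑ k, c k • (((‖ys k‖ : ℝ) : 𝕜) • u)‖ := by
            rw [e]; abel_nf
      _ ≤ ‖v - ∑ k, c k • xs k‖ + ‖∑ k, c k • (((‖ys k‖ : ℝ) : 𝕜) • u)‖ := norm_sub_le _ _
      _ < ε := by linarith
    calc Metric.infDist v (ConvRotSlice 𝕜 f ε) ≤ dist v _ := Metric.infDist_le_dist_of_mem hPmem
    _ < ε := by rw [dist_eq_norm]; exact hvP

end LushAux

/-- If `X ⊕_1 Y` (the product with norm `‖(x,y)‖ = ‖x‖ + ‖y‖`, i.e. `WithLp 1 (X × Y)`)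
is lush, then both `X` and `Y` are lush. -/
theorem isLush_of_isLush_prod_one {𝕜 X Y : Type*} [RCLike 𝕜]
    [NormedAddCommGroup X] [NormedSpace 𝕜 X] [CompleteSpace X] [Nontrivial X]
    [NormedAddCommGroup Y] [NormedSpace 𝕜 Y] [CompleteSpace Y] [Nontrivial Y]
    (h : IsLush 𝕜 (WithLp 1 (X × Y))) : IsLush 𝕜 X ∧ IsLush 𝕜 Y :=
  ⟨LushAux.fst h, LushAux.fst (LushAux.isLush_of_equiv (LushAux.swapL1 𝕜) h)⟩
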